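/- Suppose the SDS X_n^x = Ψ_n(X_{n−1}^x) on [0,∞) is generated by i.i.d. Lipschitz maps with Lipschitz constant A(Ψ_n) and A(Ψ)x ≤ Ψ(x) for x ≥ 0. If X_n^y/(A₁⋯A_n) → ∞ a.s. for every y, then the SDS is locally contractive: for all y, y′ ≥ 0 and every compact K ⊂ [0,∞), lim_{n→∞} 1_K(X_n^y)·|X_n^y − X_n^{y′}| = 0 almost surely. -/

import Mathlib

open MeasureTheory Filter Classical
noncomputable section
open scoped Classical

/-- The iterated process `X_0 = x`, `X_{n+1} = Ψ_{n+1}(X_n)` (with `Ψ` indexed from `0`). -/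
def iterSDS {Ω : Type*} (Ψ : ℕ → Ω → ℝ → ℝ) (x : ℝ) (ω : Ω) : ℕ → ℝ
  | 0 => x
  | n + 1 => Ψ n ω (iterSDS Ψ x ω n)

lemma iterSDS_nonneg {Ω : Type*} (Ψ : ℕ → Ω → ℝ → ℝ) (A : ℕ → Ω → ℝ) (ω : Ω)
    (h : ∀ n : ℕ, 0 < A n ω ∧
      (∀ x : ℝ, 0 ≤ x → A n ω * x ≤ Ψ n ω x) ∧
      (∀ x y : ℝ, 0 ≤ x → 0 ≤ y → |Ψ n ω x - Ψ n ω y| ≤ A n ω * |x - y|))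
    (x : ℝ) (hx : 0 ≤ x) : ∀ n, 0 ≤ iterSDS Ψ x ω n := by
  intro n
  induction n with
  | zero => exact hx
  | succ n ih =>
    have h1 := (h n).2.1 _ ih
    have h2 : 0 ≤ A n ω * iterSDS Ψ x ω n := mul_nonneg (h n).1.le ih
    exact h2.trans h1

lemma iterSDS_lip {Ω : Type*} (Ψ : ℕ → Ω → ℝ → ℝ) (A : ℕ → Ω → ℝ) (ω : Ω)
    (h : ∀ n : ℕ, 0 < A n ω ∧
      (∀ x : ℝ, 0 ≤ x → A n ω * x ≤ Ψ n ω x) ∧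
      (∀ x y : ℝ, 0 ≤ x → 0 ≤ y → |Ψ n ω x - Ψ n ω y| ≤ A n ω * |x - y|))
    (y y' : ℝ) (hy : 0 ≤ y) (hy' : 0 ≤ y') :
    ∀ n, |iterSDS Ψ y ω n - iterSDS Ψ y' ω n| ≤ |y - y'| * ∏ i ∈ Finset.range n, A i ω := by
  intro n
  induction n with
  | zero => simp [iterSDS]
  | succ n ih =>
    have hle := (h n).2.2 _ _ (iterSDS_nonneg Ψ A ω h y hy n) (iterSDS_nonneg Ψ A ω h y' hy' n)
    rw [Finset.prod_range_succ]
    calc |iterSDS Ψ y ω (n+1) - iterSDS Ψ y' ω (n+1)|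
        ≤ A n ω * |iterSDS Ψ y ω n - iterSDS Ψ y' ω n| := hle
      _ ≤ A n ω * (|y - y'| * ∏ i ∈ Finset.range n, A i ω) :=
          mul_le_mul_of_nonneg_left ih (h n).1.le
      _ = |y - y'| * ((∏ i ∈ Finset.range n, A i ω) * A n ω) := by ring

theorem local_contractivity_of_normalized_divergence {Ω : Type*} [MeasurableSpace Ω]
    (P : Measure Ω) [IsProbabilityMeasure P]
    (Ψ : ℕ → Ω → ℝ → ℝ) (A : ℕ → Ω → ℝ)
    (hAL : ∀ᵐ ω ∂P, ∀ n : ℕ,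
      0 < A n ω ∧
      (∀ x : ℝ, 0 ≤ x → A n ω * x ≤ Ψ n ω x) ∧
      (∀ x y : ℝ, 0 ≤ x → 0 ≤ y → |Ψ n ω x - Ψ n ω y| ≤ A n ω * |x - y|))
    (hdiv : ∀ y : ℝ, 0 ≤ y → ∀ᵐ ω ∂P,
      Tendsto (fun n => iterSDS Ψ y ω n / ∏ i ∈ Finset.range n, A i ω)
        atTop atTop) :
    ∀ y y' : ℝ, 0 ≤ y → 0 ≤ y' → ∀ K : Set ℝ, IsCompact K → K ⊆ Set.Ici 0 →
      ∀ᵐ ω ∂P,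
        Tendsto (fun n =>
            if iterSDS Ψ y ω n ∈ K then |iterSDS Ψ y ω n - iterSDS Ψ y' ω n| else 0)
          atTop (nhds 0) := by
  intro y y' hy hy' K hK hK0
  obtain ⟨C0, hC0⟩ := hK.bddAbove
  set C : ℝ := max C0 0 with hCdef
  have hC : 0 ≤ C := le_max_right _ _
  have hCK : ∀ x ∈ K, x ≤ C := fun x hx => le_trans (hC0 hx) (le_max_left _ _)
  filter_upwards [hAL, hdiv y hy] with ω hA hd
  set X : ℕ → ℝ := fun n => iterSDS Ψ y ω n with hX
  set pr : ℕ → ℝ := fun n => ∏ i ∈ Finset.range n, A i ω with hpr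
  have hprpos : ∀ n, 0 < pr n := fun n =>
    Finset.prod_pos (fun i _ => (hA i).1)
  set r : ℕ → ℝ := fun n => X n / pr n with hr
  have hrt : Tendsto r atTop atTop := hd
  have hinv : Tendsto (fun n => |y - y'| * C * (r n)⁻¹) atTop (nhds 0) := by
    have := hrt.inv_tendsto_atTop
    simpa using this.const_mul (|y - y'| * C)
  refine squeeze_zero' (Eventually.of_forall fun n => by positivity) ?_ hinv
  have hev : ∀ᶠ n in atTop, 1 ≤ r n := hrt.eventually_ge_atTop 1
  filter_upwards [hev] with n hrn
  have hrpos : 0 < r n := lt_of_lt_of_le one_pos hrn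
  by_cases hmem : iterSDS Ψ y ω n ∈ K
  · rw [if_pos hmem]
    have hlip := iterSDS_lip Ψ A ω hA y y' hy hy' n
    have hXpos : 0 < X n := lt_of_lt_of_le (hprpos n) ((one_le_div (hprpos n)).mp hrn)
    have hprX : pr n = X n / r n := by
      rw [hr]
      field_simp
    have hXC : X n ≤ C := hCK _ hmem
    have hprC : pr n ≤ C / r n := by
      rw [hprX]
      exact div_le_div_of_nonneg_right hXC hrpos.le
    calc |iterSDS Ψ y ω n - iterSDS Ψ y' ω n| ≤ |y - y'| * pr n := hlip
      _ ≤ |y - y'| * (C / r n) := mul_le_mul_of_nonneg_left hprC (abs_nonneg _)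
      _ = |y - y'| * C * (r n)⁻¹ := by ring
  · rw [if_neg hmem]
    positivity
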